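/- The odd renormalized Jacobi theta function admits the expansion Θ(z) = z · exp(-2 ∑_{k ≥ 2, k even} G_k z^k / k!) as a formal power series in z with coefficients in ℚ[[q]], where G_k(τ) = -B_k/(2k) + ∑_{n≥1} ∑_{d|n} d^{k-1} q^n are the renormalized Eisenstein series. -/

import Mathlib

noncomputable section

/-- The ring `ℚ[[q]]`. -/
abbrev A : Type := PowerSeries ℚ

/-- Formal exponential of a power series (intended for series with zero constant term). -/
def pexp {R : Type*} [CommRing R] [Algebra ℚ R] (f : PowerSeries R) : PowerSeries R :=
  PowerSeries.mk fun N =>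
    ∑ n ∈ Finset.range (N + 1), (n.factorial : ℚ)⁻¹ • PowerSeries.coeff N (f ^ n)

/-- The logarithm of the triple-product part of `Θ(z)`, namely
`log ∏_{m≥1} (1-pq^m)(1-p⁻¹q^m)/(1-q^m)² = -∑_{k≥1} (p^k + p^{-k} - 2)·q^k/(k(1-q^k))`
with `p = e^z`, expanded as a power series in `z` with coefficients in `ℚ[[q]]`. -/
def Lz : PowerSeries A :=
  PowerSeries.mk fun j =>
    PowerSeries.mk fun N =>
      -(j.factorial : ℚ)⁻¹ *
        ∑ d ∈ N.divisors, (d : ℚ)⁻¹ *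
          ((d : ℚ) ^ j + (-(d : ℚ)) ^ j - if j = 0 then 2 else 0)

/-- The prefactor `p^{1/2} - p^{-1/2} = e^{z/2} - e^{-z/2}` as a power series in `z`. -/
def Pz : PowerSeries A :=
  PowerSeries.mk fun j =>
    PowerSeries.C (((2 : ℚ)⁻¹) ^ j * (j.factorial : ℚ)⁻¹ * (1 - (-1 : ℚ) ^ j))

/-- The odd renormalized Jacobi theta function
`Θ(z) = (p^{1/2}-p^{-1/2}) ∏_{m≥1} (1-pq^m)(1-p^{-1}q^m)/(1-q^m)²` with `p = e^z`,
as a power series in `z` with coefficients in `ℚ[[q]]`. -/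
def Theta : PowerSeries A := Pz * pexp Lz

/-- The renormalized Eisenstein series `G_k = -B_k/(2k) + ∑_{n≥1} ∑_{d|n} d^{k-1} q^n`. -/
def G (k : ℕ) : A :=
  PowerSeries.mk fun n =>
    if n = 0 then -bernoulli k / (2 * k) else ∑ d ∈ n.divisors, (d : ℚ) ^ (k - 1)

open PowerSeries Finset

namespace ThetaAux

variable {R : Type*} [CommRing R] [Algebra ℚ R]

lemma coeff_pow_eq_zero {f : R⟦X⟧} (hf : constantCoeff f = 0) {N n : ℕ} (h : N < n) :
    coeff N (f ^ n) = 0 :=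
  PowerSeries.X_pow_dvd_iff.mp (pow_dvd_pow_of_dvd (PowerSeries.X_dvd_iff.mpr hf) n) N h

lemma coeff_pexp (f : R⟦X⟧) (N : ℕ) :
    coeff N (pexp f) = ∑ n ∈ range (N + 1), (n.factorial : ℚ)⁻¹ • coeff N (f ^ n) :=
  coeff_mk _ _

lemma constantCoeff_pexp (f : R⟦X⟧) : constantCoeff (pexp f) = 1 := by
  rw [← coeff_zero_eq_constantCoeff_apply, coeff_pexp]
  simp

/-- truncated exponential -/
def texp (f : R⟦X⟧) (m : ℕ) : R⟦X⟧ := ∑ n ∈ range m, (n.factorial : ℚ)⁻¹ • f ^ n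

lemma coeff_pexp_eq_texp {f : R⟦X⟧} (hf : constantCoeff f = 0) {j m : ℕ} (h : j < m) :
    coeff j (pexp f) = coeff j (texp f m) := by
  rw [coeff_pexp, texp, map_sum]
  simp_rw [coeff_smul]
  refine Finset.sum_subset (range_subset_range.mpr h) fun x _ hx => ?_
  rw [coeff_pow_eq_zero hf (by simpa using hx), smul_zero]

lemma derivative_qsmul (c : ℚ) (f : R⟦X⟧) : d⁄dX R (c • f) = c • d⁄dX R f := by
  ext n
  rw [coeff_derivative, coeff_smul, coeff_smul, coeff_derivative, smul_mul_assoc]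

lemma derivative_texp (f : R⟦X⟧) (m : ℕ) :
    d⁄dX R (texp f (m + 1)) = d⁄dX R f * texp f m := by
  rw [texp, map_sum, Finset.sum_range_succ', texp, Finset.mul_sum]
  have h0 : d⁄dX R ((Nat.factorial 0 : ℚ)⁻¹ • f ^ 0) = 0 := by
    simp [Derivation.map_one_eq_zero]
  rw [h0, add_zero]
  refine Finset.sum_congr rfl fun n _ => ?_
  rw [derivative_qsmul, Derivation.leibniz_pow, ← Nat.cast_smul_eq_nsmul ℚ, smul_smul]
  have hfac : ((n + 1 : ℕ) : ℚ) * ((n + 1).factorial : ℚ)⁻¹ = (n.factorial : ℚ)⁻¹ := by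
    rw [Nat.factorial_succ]
    push_cast
    rw [mul_inv]
    have h1 : ((n : ℚ) + 1) ≠ 0 := by positivity
    field_simp
  rw [mul_comm ((((n:ℕ) + 1).factorial : ℚ))⁻¹, hfac, Nat.add_sub_cancel, smul_eq_mul, mul_comm (f ^ n), ← mul_smul_comm]

lemma derivative_pexp {f : R⟦X⟧} (hf : constantCoeff f = 0) :
    d⁄dX R (pexp f) = d⁄dX R f * pexp f := by
  ext N
  rw [coeff_derivative, coeff_pexp_eq_texp hf (Nat.lt_succ_self _ : N + 1 < N + 2),
    ← coeff_derivative, derivative_texp, coeff_mul, coeff_mul]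
  refine Finset.sum_congr rfl fun p hp => ?_
  rw [← coeff_pexp_eq_texp hf]
  have := Finset.HasAntidiagonal.antidiagonal.snd_le hp
  omega

/-- uniqueness for Y' = w Y in a ℚ-algebra. -/
lemma ode_unique {w F G : R⟦X⟧} (hF : d⁄dX R F = w * F) (hG : d⁄dX R G = w * G)
    (h0 : constantCoeff F = constantCoeff G) : F = G := by
  have key : ∀ n, coeff n F = coeff n G := by
    intro n
    induction n using Nat.strong_induction_on with
    | _ n ih =>
      match n with
      | 0 => simpa [coeff_zero_eq_constantCoeff] using h0
      | Nat.succ m =>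
        have hd : coeff m (d⁄dX R F) = coeff m (d⁄dX R G) := by
          rw [hF, hG, coeff_mul, coeff_mul]
          refine Finset.sum_congr rfl fun p hp => ?_
          rw [ih p.2 (by have := Finset.HasAntidiagonal.antidiagonal.snd_le hp; omega)]
        rw [coeff_derivative, coeff_derivative] at hd
        have hm : ((m : ℚ) + 1) ≠ 0 := by positivity
        have hcast : ∀ x : R, ((m : ℚ) + 1)⁻¹ • (x * ((m : R) + 1)) = x := fun x => by
          have h1 : ((m : R) + 1) = algebraMap ℚ R ((m : ℚ) + 1) := by push_cast; simp
          rw [h1, mul_comm, ← Algebra.smul_def, smul_smul, inv_mul_cancel₀ hm, one_smul]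
        rw [← hcast ((coeff (m+1)) F), ← hcast ((coeff (m+1)) G)]
        rw [hd]
  ext n; exact key n

lemma pexp_add {f g : R⟦X⟧} (hf : constantCoeff f = 0) (hg : constantCoeff g = 0) :
    pexp (f + g) = pexp f * pexp g := by
  refine ode_unique (w := d⁄dX R (f + g)) (derivative_pexp (by simp [map_add, hf, hg])) ?_ ?_
  · rw [Derivation.leibniz, smul_eq_mul, smul_eq_mul, derivative_pexp hf, derivative_pexp hg,
      map_add]
    ring
  · simp [constantCoeff_pexp, map_mul]

/-! ### The Bernoulli identity over ℚ -/

/-- `∑_{k even ≥ 2} B_k/(k·k!) X^k`. -/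
def bq : ℚ⟦X⟧ :=
  PowerSeries.mk fun k => if 2 ≤ k ∧ Even k then bernoulli k / (k * k.factorial) else 0

/-- `e^{X/2} - e^{-X/2}` over ℚ. -/
def Pq : ℚ⟦X⟧ :=
  PowerSeries.mk fun j => ((2 : ℚ)⁻¹) ^ j * (j.factorial : ℚ)⁻¹ * (1 - (-1 : ℚ) ^ j)

lemma constantCoeff_bq : constantCoeff bq = 0 := by
  rw [← coeff_zero_eq_constantCoeff_apply, bq, coeff_mk]
  norm_num

lemma hXb : X * d⁄dX ℚ bq = bernoulliPowerSeries ℚ - 1 + C 2⁻¹ * X := by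
  ext n
  match n with
  | 0 =>
    rw [coeff_zero_eq_constantCoeff_apply, map_mul, constantCoeff_X, zero_mul]
    simp [bernoulliPowerSeries, coeff_mk, coeff_zero_eq_constantCoeff_apply]
  | 1 =>
    rw [coeff_succ_X_mul, coeff_derivative, bq, coeff_mk, if_neg (by rintro ⟨h, -⟩; omega)]
    simp [bernoulliPowerSeries, coeff_mk, bernoulli_one, coeff_X, coeff_one]
    norm_num
  | (m+2) =>
    rw [coeff_succ_X_mul, coeff_derivative, map_add, map_sub,
      coeff_one, if_neg (show ¬(m+2 = 0) by omega), coeff_C_mul, coeff_X,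
      if_neg (show ¬(m+2 = 1) by omega), mul_zero, add_zero, sub_zero,
      bernoulliPowerSeries, coeff_mk, bq, coeff_mk]
    simp only [Algebra.algebraMap_self, RingHom.id_apply]
    by_cases he : Even (m + 2)
    · rw [if_pos ⟨by omega, he⟩]
      have h1 : ((m + 2 : ℕ) : ℚ) ≠ 0 := by positivity
      have h2 : ((m + 2).factorial : ℚ) ≠ 0 := by
        exact_mod_cast Nat.factorial_ne_zero _
      push_cast at h1 h2 ⊢
      field_simp
    · rw [if_neg (by tauto), zero_mul]
      have hodd : Odd (m + 2) := Nat.odd_iff.mpr (Nat.not_even_iff.mp he)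
      have hb : bernoulli (m + 2) = 0 := by
        rw [bernoulli_eq_bernoulli'_of_ne_one (by omega)]
        exact bernoulli'_eq_zero_of_odd hodd (by omega)
      simp [hb]

lemma derivative_rescale_exp (a : ℚ) :
    d⁄dX ℚ (rescale a (exp ℚ)) = C a * rescale a (exp ℚ) := by
  ext n
  rw [coeff_derivative, coeff_C_mul, coeff_rescale, coeff_rescale, coeff_exp, coeff_exp]
  have h2 : ((n + 1).factorial : ℚ) ≠ 0 := by exact_mod_cast Nat.factorial_ne_zero _
  have h3 : ((n).factorial : ℚ) ≠ 0 := by exact_mod_cast Nat.factorial_ne_zero _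
  simp only [Algebra.algebraMap_self, RingHom.id_apply]
  rw [Nat.factorial_succ]
  push_cast
  field_simp
  ring

lemma hPq : Pq = rescale 2⁻¹ (exp ℚ) - rescale (-2⁻¹) (exp ℚ) := by
  ext j
  rw [Pq, coeff_mk, map_sub, coeff_rescale, coeff_rescale, coeff_exp]
  simp only [Algebra.algebraMap_self, RingHom.id_apply]
  have hneg : ((-2⁻¹ : ℚ)) ^ j = (-1) ^ j * 2⁻¹ ^ j := by
    rw [← neg_one_mul, mul_pow]
  rw [hneg]
  ring

lemma ode_P : X * d⁄dX ℚ Pq = Pq * (1 + X * d⁄dX ℚ bq) := by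
  rw [hXb, hPq]
  set p := rescale (2⁻¹ : ℚ) (exp ℚ) with hp
  set q := rescale (-2⁻¹ : ℚ) (exp ℚ) with hq
  have hpq : p * q = 1 := by
    rw [hp, hq, exp_mul_exp_eq_exp_add]
    norm_num [rescale_zero]
  have hpp : p * p = exp ℚ := by
    rw [hp, exp_mul_exp_eq_exp_add]
    norm_num [rescale_one]
  have hB := bernoulliPowerSeries_mul_exp_sub_one ℚ
  have h2 : C (2⁻¹ : ℚ) + C (2⁻¹ : ℚ) = 1 := by
    rw [← map_add]
    norm_num
  have hp0 : p ≠ 0 := by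
    intro h
    rw [h, zero_mul] at hpq
    exact one_ne_zero hpq.symm
  have hd : d⁄dX ℚ (p - q) = C 2⁻¹ * (p + q) := by
    rw [map_sub, hp, hq, derivative_rescale_exp, derivative_rescale_exp, ← hp, ← hq]
    rw [map_neg]
    ring
  rw [hd]
  apply mul_right_cancel₀ hp0
  linear_combination (X * C (2⁻¹:ℚ) - bernoulliPowerSeries ℚ - C (2⁻¹:ℚ) * X) * hpp +
    (X * C (2⁻¹:ℚ) + bernoulliPowerSeries ℚ + C (2⁻¹:ℚ) * X) * hpq - hB + X * h2

lemma ode_XE : X * d⁄dX ℚ (X * pexp bq) = (X * pexp bq) * (1 + X * d⁄dX ℚ bq) := by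
  have h := derivative_pexp (R := ℚ) constantCoeff_bq
  rw [Derivation.leibniz, smul_eq_mul, smul_eq_mul, derivative_X, h]
  ring

lemma ode_uniqueX {w F G : ℚ⟦X⟧} (hw : constantCoeff w = 1)
    (hF : X * d⁄dX ℚ F = F * w) (hG : X * d⁄dX ℚ G = G * w)
    (h0 : coeff 0 F = coeff 0 G) (h1 : coeff 1 F = coeff 1 G) : F = G := by
  have hode : X * d⁄dX ℚ (F - G) = (F - G) * w := by
    rw [map_sub, mul_sub, sub_mul, hF, hG]
  have key : ∀ n, coeff n (F - G) = 0 := by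
    intro n
    induction n using Nat.strong_induction_on with
    | _ n ih =>
      match n with
      | 0 => rw [map_sub, h0, sub_self]
      | 1 => rw [map_sub, h1, sub_self]
      | (m+2) =>
        have hc := congrArg (coeff (m+2)) hode
        rw [coeff_succ_X_mul, coeff_derivative, coeff_mul,
          Finset.sum_eq_single (m+2, 0)] at hc
        · rw [coeff_zero_eq_constantCoeff_apply, hw, mul_one] at hc
          by_contra ha
          have h2 := mul_left_cancel₀ ha (hc.trans (mul_one _).symm)
          have hm : ((m : ℚ) + 1 + 1) ≠ 1 := by
            have : (0:ℚ) < (m:ℚ) + 1 := by positivity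
            intro h; linarith
          exact hm (by push_cast at h2 ⊢; linarith)
        · rintro ⟨i, j⟩ hij hne
          rw [Finset.HasAntidiagonal.mem_antidiagonal] at hij
          have hi : i < m + 2 := by
            by_contra h
            apply hne
            have hi2 : i = m + 2 := by omega
            have hj : j = 0 := by omega
            simp [hi2, hj]
          rw [ih i hi, zero_mul]
        · intro h
          exact absurd (Finset.HasAntidiagonal.mem_antidiagonal.mpr (by simp)) h
  have hFG : F - G = 0 := by
    ext n; simpa using key n
  exact sub_eq_zero.mp hFG
  
lemma Pq_eq : Pq = X * pexp bq := by
  apply ode_uniqueX (w := 1 + X * d⁄dX ℚ bq) _ ode_P ode_XE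
  · rw [Pq, coeff_mk, coeff_zero_eq_constantCoeff_apply, map_mul, constantCoeff_X, zero_mul]
    norm_num
  · rw [Pq, coeff_mk, coeff_succ_X_mul, coeff_zero_eq_constantCoeff_apply, constantCoeff_pexp]
    norm_num
  · simp [constantCoeff_X]


/-! ### Lifting to `A = ℚ[[q]]` -/

variable {S : Type*} [CommRing S] [Algebra ℚ S]

lemma map_pexp (f : ℚ⟦X⟧) :
    PowerSeries.map (algebraMap ℚ S) (pexp f) = pexp (PowerSeries.map (algebraMap ℚ S) f) := by
  ext N
  rw [coeff_map, coeff_pexp, coeff_pexp, map_sum]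
  refine Finset.sum_congr rfl fun n _ => ?_
  rw [← map_pow, coeff_map, smul_eq_mul, map_mul, ← Algebra.smul_def]

lemma algebraMap_A (r : ℚ) : algebraMap ℚ A r = PowerSeries.C r := by
  rw [PowerSeries.algebraMap_apply, Algebra.algebraMap_self, RingHom.id_apply]

lemma Pz_eq : Pz = PowerSeries.map (algebraMap ℚ A) Pq := by
  ext j
  rw [Pz, coeff_mk, coeff_map, Pq, coeff_mk, algebraMap_A]

lemma constantCoeff_Lz : constantCoeff Lz = 0 := by
  rw [← coeff_zero_eq_constantCoeff_apply, Lz, coeff_mk]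
  ext N
  rw [coeff_mk]
  simp
  norm_num

lemma constantCoeff_Bz : constantCoeff (PowerSeries.map (algebraMap ℚ A) bq) = 0 := by
  rw [← coeff_zero_eq_constantCoeff_apply, coeff_map]
  have h := constantCoeff_bq
  rw [← coeff_zero_eq_constantCoeff_apply] at h
  rw [h, map_zero]

lemma decomp :
    (PowerSeries.mk fun k =>
        if 2 ≤ k ∧ Even k then ((-2 : ℚ) * (k.factorial : ℚ)⁻¹) • G k else 0) =
      PowerSeries.map (algebraMap ℚ A) bq + Lz := by
  ext k N
  rw [coeff_mk, map_add, coeff_map, bq, coeff_mk, Lz, coeff_mk, algebraMap_A, map_add,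
    PowerSeries.coeff_C, coeff_mk]
  by_cases hk : 2 ≤ k ∧ Even k
  · rw [if_pos hk, if_pos hk, PowerSeries.coeff_smul, G, coeff_mk]
    have hk0 : (k : ℚ) ≠ 0 := by
      have : 0 < k := by omega
      positivity
    have hkf : (k.factorial : ℚ) ≠ 0 := by exact_mod_cast Nat.factorial_ne_zero _
    match N with
    | 0 =>
      rw [if_pos rfl, if_pos rfl]
      rw [Nat.divisors_zero]
      simp only [Finset.sum_empty, mul_zero, neg_zero, add_zero, smul_eq_mul]
      field_simp
    | (m+1) =>
      rw [if_neg (by omega), if_neg (by omega), smul_eq_mul]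
      have hsum : ∀ d ∈ (m+1).divisors,
          (d : ℚ)⁻¹ * ((d : ℚ) ^ k + (-(d : ℚ)) ^ k - if k = 0 then 2 else 0) =
            2 * (d : ℚ) ^ (k - 1) := by
        intro d hd
        have hd0 : 0 < d := Nat.pos_of_mem_divisors hd
        have hdq : (d : ℚ) ≠ 0 := by positivity
        rw [hk.2.neg_pow, if_neg (by omega), sub_zero]
        have hke : k - 1 + 1 = k := by omega
        rw [← hke, pow_succ]
        field_simp
        rw [Nat.add_sub_cancel]
        ring
      rw [Finset.sum_congr rfl hsum, ← Finset.mul_sum]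
      ring
  · rw [if_neg hk, if_neg hk, map_zero, ite_self, zero_add]
    by_cases hk0 : k = 0
    · subst hk0
      norm_num
    · have hodd : Odd k := by
        rcases Nat.even_or_odd k with he | ho
        · rcases he with ⟨t, ht⟩
          exact absurd ⟨by omega, ⟨t, ht⟩⟩ hk
        · exact ho
      have : ∀ d ∈ N.divisors,
          (d : ℚ)⁻¹ * ((d : ℚ) ^ k + (-(d : ℚ)) ^ k - if k = 0 then 2 else 0) = 0 := by
        intro d _
        rw [hodd.neg_pow, if_neg hk0]
        ring
      rw [Finset.sum_congr rfl this, Finset.sum_const_zero, mul_zero]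

end ThetaAux

/-- **Equation (2.2).** `Θ(z) = z · exp(-2 ∑_{k ≥ 2 even} G_k z^k / k!)`. -/
theorem stmt10 :
    Theta = PowerSeries.X *
      pexp (PowerSeries.mk fun k =>
        if 2 ≤ k ∧ Even k then ((-2 : ℚ) * (k.factorial : ℚ)⁻¹) • G k else 0) := by
  rw [ThetaAux.decomp, Theta, ThetaAux.Pz_eq, ThetaAux.Pq_eq, map_mul, PowerSeries.map_X,
    ThetaAux.map_pexp, ThetaAux.pexp_add ThetaAux.constantCoeff_Bz ThetaAux.constantCoeff_Lz]
  ring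

end
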